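/- Let {E_n}_{n≥1} be a sequence of diagonal projections on H such that ∑_{n≥1} E_n = I + K (convergence in the weak operator topology) for some compact operator K. Then there exists an integer n_0 ≥ 1 such that: (i) E_n E_m = δ_{nm} E_n for all m, n > n_0; (ii) E_n E_m is a finite-rank projection for all 1 ≤ m, n ≤ n_0 with m ≠ n; (iii) for each N ≥ n_0, E^{(N)} := ∑_{n > N} E_n is a diagonal projection and E^{(N)} E_n = 0 for all n = 1, ..., N. -/

import Mathlib

open Filter Topology
open scoped InnerProductSpace

noncomputable section

variable {H : Type*} [NormedAddCommGroup H] [InnerProductSpace ℂ H] [CompleteSpace H]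

/-- A (two-sided) operator ideal of `B(H)`. -/
def IsOpIdeal (J : Set (H →L[ℂ] H)) : Prop :=
  (0 : H →L[ℂ] H) ∈ J ∧
  (∀ A B : H →L[ℂ] H, A ∈ J → B ∈ J → A + B ∈ J) ∧
  (∀ A B : H →L[ℂ] H, B ∈ J → A * B ∈ J) ∧
  (∀ A B : H →L[ℂ] H, A ∈ J → A * B ∈ J)

/-- A proper operator ideal: `{0} ≠ J ≠ B(H)`. -/
def IsProperOpIdeal (J : Set (H →L[ℂ] H)) : Prop :=
  IsOpIdeal J ∧ J ≠ {0} ∧ J ≠ Set.univ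

/-- Orthogonal (self-adjoint, idempotent) projection. -/
def IsOrthogonalProjection (P : H →L[ℂ] H) : Prop :=
  IsSelfAdjoint P ∧ P * P = P

/-- Diagonal with respect to the fixed orthonormal basis `e`. -/
def IsDiagonalOp (e : HilbertBasis ℕ ℂ H) (A : H →L[ℂ] H) : Prop :=
  ∀ m n : ℕ, m ≠ n → ⟪A (e m), e n⟫_ℂ = 0

def IsDiagonalProjection (e : HilbertBasis ℕ ℂ H) (P : H →L[ℂ] H) : Prop :=
  IsOrthogonalProjection P ∧ IsDiagonalOp e P

/-- Membership in the restricted unitary group `U_J(H) = U(H) ∩ (I + J)`. -/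
def InRestrictedUnitary (J : Set (H →L[ℂ] H)) (U : H →L[ℂ] H) : Prop :=
  U ∈ unitary (H →L[ℂ] H) ∧ U - 1 ∈ J

/-- `A` is `U_J(H)`-diagonalizable with respect to `e`. -/
def RestrictedDiagonalizable (e : HilbertBasis ℕ ℂ H) (J : Set (H →L[ℂ] H))
    (A : H →L[ℂ] H) : Prop :=
  ∃ U : H →L[ℂ] H, InRestrictedUnitary J U ∧ IsDiagonalOp e (U * A * star U)

/-- Convergence of the partial sums of the series `∑ T n` to `S` in the weak operator
topology. -/
def WOTSum (T : ℕ → H →L[ℂ] H) (S : H →L[ℂ] H) : Prop :=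
  ∀ x y : H, Tendsto (fun N : ℕ => ∑ n ∈ Finset.range N, ⟪T n x, y⟫_ℂ)
    atTop (nhds ⟪S x, y⟫_ℂ)

/-- Decomposition of the identity: mutually orthogonal self-adjoint projections summing
to the identity in the strong operator topology. -/
def IsDecompositionOfIdentity (P : ℕ → H →L[ℂ] H) : Prop :=
  (∀ n, IsOrthogonalProjection (P n)) ∧ (∀ m n, m ≠ n → P m * P n = 0) ∧
  (∀ x : H, HasSum (fun n => P n x) x)

/-- `A` is diagonalizable with infinite point spectrum, distinct eigenvalues `lam` and
spectral projections `P`. -/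
def SpectralDataOf (A : H →L[ℂ] H) (lam : ℕ → ℂ) (P : ℕ → H →L[ℂ] H) : Prop :=
  IsDecompositionOfIdentity P ∧ (∀ n, P n ≠ 0) ∧ Function.Injective lam ∧
  (∀ x : H, HasSum (fun n => lam n • P n x) (A x))

/-- Finite rank operator. -/
def IsFiniteRankOp (T : H →L[ℂ] H) : Prop :=
  FiniteDimensional ℂ (LinearMap.range (T : H →ₗ[ℂ] H))

/-- The `n`-th approximation number (= `(n+1)`-th singular value for compact operators). -/
noncomputable def sNum (T : H →L[ℂ] H) (n : ℕ) : ℝ :=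
  sInf {c : ℝ | ∃ F : H →L[ℂ] H, IsFiniteRankOp F ∧
    Module.finrank ℂ (LinearMap.range (F : H →ₗ[ℂ] H)) ≤ n ∧ c = ‖T - F‖}

/-- The arithmetic mean closure `J^{-am}` of an operator ideal. -/
def amClosure (J : Set (H →L[ℂ] H)) : Set (H →L[ℂ] H) :=
  {A | IsCompactOperator ⇑A ∧ ∃ B ∈ J, ∃ M : ℝ, 0 < M ∧ ∀ n : ℕ,
    (∑ k ∈ Finset.range (n + 1), sNum A k) ≤ M * (∑ k ∈ Finset.range (n + 1), sNum B k)}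

/-- `(P, Q)` is a Fredholm pair of projections with essential codimension `[P : Q] = 0`. -/
def EssCodimZero (P Q : H →L[ℂ] H) : Prop :=
  IsClosed (⇑Q '' (LinearMap.range (P : H →ₗ[ℂ] H) : Set H)) ∧
  FiniteDimensional ℂ
    ↥(LinearMap.ker (Q : H →ₗ[ℂ] H) ⊓ LinearMap.range (P : H →ₗ[ℂ] H)) ∧
  FiniteDimensional ℂ
    ↥(LinearMap.range (Q : H →ₗ[ℂ] H) ⊓ LinearMap.ker (P : H →ₗ[ℂ] H)) ∧
  Module.finrank ℂ
    ↥(LinearMap.ker (Q : H →ₗ[ℂ] H) ⊓ LinearMap.range (P : H →ₗ[ℂ] H)) =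
  Module.finrank ℂ
    ↥(LinearMap.range (Q : H →ₗ[ℂ] H) ⊓ LinearMap.ker (P : H →ₗ[ℂ] H))

/-- Hilbert–Schmidt operator. -/
def IsHilbertSchmidt (T : H →L[ℂ] H) : Prop :=
  ∀ b : HilbertBasis ℕ ℂ H, Summable (fun n => ‖T (b n)‖ ^ 2)

/-- Partial isometry: isometric on the orthogonal complement of its kernel. -/
def IsPartialIsometryOp (V : H →L[ℂ] H) : Prop :=
  ∀ x ∈ (LinearMap.ker (V : H →ₗ[ℂ] H))ᗮ, ‖V x‖ = ‖x‖


set_option linter.unusedSectionVars false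

section AuxLemmas

lemma basis_ext (e : HilbertBasis ℕ ℂ H) {A B : H →L[ℂ] H}
    (h : ∀ k, A (e k) = B (e k)) : A = B :=
  ContinuousLinearMap.ext_on
    (Submodule.dense_iff_topologicalClosure_eq_top.mpr e.dense_span)
    (by rintro x ⟨k, rfl⟩; exact h k)

lemma inner_basis_self (e : HilbertBasis ℕ ℂ H) (k : ℕ) : ⟪e k, e k⟫_ℂ = 1 := by
  have := e.orthonormal.1 k
  rw [@inner_self_eq_norm_sq_to_K ℂ, this]
  norm_num

lemma inner_basis_ne (e : HilbertBasis ℕ ℂ H) {j k : ℕ} (h : j ≠ k) : ⟪e j, e k⟫_ℂ = 0 :=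
  e.orthonormal.2 h

lemma diagProj_apply (e : HilbertBasis ℕ ℂ H) {P : H →L[ℂ] H}
    (hP : IsDiagonalProjection e P) (k : ℕ) : P (e k) = e k ∨ P (e k) = 0 := by
  obtain ⟨⟨hsa, hidem⟩, hdiag⟩ := hP
  set c := e.repr (P (e k)) k with hc
  have hrepr : P (e k) = c • e k := by
    apply e.repr.injective
    ext j
    rw [map_smul, e.repr_self, lp.coeFn_smul, Pi.smul_apply]
    by_cases hj : j = k
    · subst hj; rw [lp.single_apply_self]; simp [hc]
    · have h0 : e.repr (P (e k)) j = 0 := by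
        rw [e.repr_apply_apply, ← inner_conj_symm, hdiag k j (Ne.symm hj), map_zero]
      rw [h0, lp.single_apply_ne _ _ _ hj]
      simp
  have h2 : P (P (e k)) = P (e k) := by
    have := congrFun (congrArg (fun T : H →L[ℂ] H => ⇑T) hidem) (e k)
    simpa [ContinuousLinearMap.mul_apply] using this
  rw [hrepr, map_smul, hrepr, smul_smul] at h2
  have hek : e k ≠ 0 := e.orthonormal.ne_zero k
  have hcc : (c * c - c) • e k = 0 := by rw [sub_smul, h2, sub_self]
  rcases smul_eq_zero.mp hcc with h | h
  · rcases mul_eq_zero.mp (by linear_combination h : c * (c - 1) = 0) with h' | h'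
    · right; rw [hrepr, h', zero_smul]
    · left; rw [hrepr, sub_eq_zero.mp h', one_smul]
  · exact absurd h hek

lemma inner_fixed_tendsto (e : HilbertBasis ℕ ℂ H) (y : H) :
    Tendsto (fun k => ⟪y, e k⟫_ℂ) atTop (𝓝 0) := by
  have hmem : Memℓp (⇑(e.repr y)) 2 := lp.memℓp (e.repr y)
  have hsum : Summable fun k => ‖e.repr y k‖ ^ (2 : ℝ) := by
    rw [Memℓp, if_neg (by norm_num), if_neg (by norm_num)] at hmem
    simpa using hmem
  have h1 : Tendsto (fun k => ‖e.repr y k‖ ^ (2 : ℝ)) atTop (𝓝 0) :=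
    hsum.tendsto_atTop_zero
  have h2 : Tendsto (fun k => ‖e.repr y k‖) atTop (𝓝 0) := by
    have := (Real.continuousAt_rpow_const 0 (1/2) (by norm_num)).tendsto.comp h1
    simp only [Function.comp_def] at this
    rw [Real.zero_rpow (by norm_num)] at this
    convert this using 2 with k
    rw [← Real.rpow_mul (norm_nonneg _)]
    norm_num
  have h3 : Tendsto (fun k => ‖⟪y, e k⟫_ℂ‖) atTop (𝓝 0) := by
    convert h2 using 2 with k
    rw [← inner_conj_symm, ← e.repr_apply_apply]
    exact (RCLike.norm_conj _)
  exact tendsto_zero_iff_norm_tendsto_zero.mpr h3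

lemma inner_compact_tendsto (e : HilbertBasis ℕ ℂ H) {K : H →L[ℂ] H}
    (hK : IsCompactOperator ⇑K) :
    Tendsto (fun k => ⟪K (e k), e k⟫_ℂ) atTop (𝓝 0) := by
  obtain ⟨C, hC, hCK⟩ := hK
  obtain ⟨r, hr, hball⟩ := Metric.mem_nhds_iff.mp hCK
  rw [NormedAddCommGroup.tendsto_nhds_zero]
  intro ε hε
  have hδ : (0:ℝ) < ε * r / 4 := by positivity
  obtain ⟨t, hts, htf, htcover⟩ := hC.finite_cover_balls hδ
  have hev : ∀ᶠ k in atTop, ∀ y ∈ t, ‖⟪y, e k⟫_ℂ‖ < ε * r / 4 := by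
    rw [Filter.eventually_all_finite htf]
    intro y _
    have := (inner_fixed_tendsto e y).norm
    rw [norm_zero] at this
    exact this.eventually_lt_const hδ
  filter_upwards [hev] with k hk
  set u : H := ((r:ℂ)/2) • e k with hu
  have hunorm : ‖u‖ < r := by
    rw [hu, norm_smul, e.orthonormal.1 k]
    simp only [mul_one]
    rw [show ((r:ℂ)/2) = (((r/2 : ℝ)):ℂ) by push_cast; ring, Complex.norm_real, Real.norm_eq_abs]
    rw [abs_of_pos (by linarith)]
    linarith
  have hKu : K u ∈ C := hball (by simpa [Metric.mem_ball, dist_zero_right] using hunorm)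
  obtain ⟨y, hyt, hy⟩ := Set.mem_iUnion₂.mp (htcover hKu)
  rw [Metric.mem_ball, dist_eq_norm] at hy
  have key : ⟪K u, e k⟫_ℂ = ((r:ℂ)/2) * ⟪K (e k), e k⟫_ℂ := by
    rw [hu, map_smul, inner_smul_left]
    congr 1
    rw [show ((r:ℂ)/2) = (((r/2 : ℝ)):ℂ) by push_cast; ring, Complex.conj_ofReal]
  have hsplit : ‖⟪K u, e k⟫_ℂ‖ ≤ ‖K u - y‖ * ‖e k‖ + ‖⟪y, e k⟫_ℂ‖ := by
    calc ‖⟪K u, e k⟫_ℂ‖ = ‖⟪K u - y, e k⟫_ℂ + ⟪y, e k⟫_ℂ‖ := by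
          rw [← inner_add_left, sub_add_cancel]
      _ ≤ ‖⟪K u - y, e k⟫_ℂ‖ + ‖⟪y, e k⟫_ℂ‖ := norm_add_le _ _
      _ ≤ ‖K u - y‖ * ‖e k‖ + ‖⟪y, e k⟫_ℂ‖ := by
          gcongr; exact norm_inner_le_norm _ _
  have hKue : ‖⟪K u, e k⟫_ℂ‖ < ε * r / 2 := by
    have := hk y hyt
    rw [e.orthonormal.1 k] at hsplit
    calc ‖⟪K u, e k⟫_ℂ‖ ≤ ‖K u - y‖ * 1 + ‖⟪y, e k⟫_ℂ‖ := hsplit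
      _ < (ε * r / 4) * 1 + (ε * r / 4) := by gcongr
      _ = ε * r / 2 := by ring
  have hnorm2 : ‖⟪K u, e k⟫_ℂ‖ = (r/2) * ‖⟪K (e k), e k⟫_ℂ‖ := by
    rw [key, norm_mul]
    congr 1
    rw [show ((r:ℂ)/2) = (((r/2 : ℝ)):ℂ) by push_cast; ring, Complex.norm_real, Real.norm_eq_abs,
      abs_of_pos (by linarith)]
  rw [hnorm2] at hKue
  nlinarith [norm_nonneg (⟪K (e k), e k⟫_ℂ)]


def projSub (e : HilbertBasis ℕ ℂ H) (T : Set ℕ) : Submodule ℂ H :=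
  (Submodule.span ℂ (⇑e '' T)).topologicalClosure

instance (e : HilbertBasis ℕ ℂ H) (T : Set ℕ) : CompleteSpace (projSub e T) :=
  (Submodule.isClosed_topologicalClosure _).isComplete.completeSpace_coe

def projOf (e : HilbertBasis ℕ ℂ H) (T : Set ℕ) : H →L[ℂ] H :=
  (projSub e T).subtypeL ∘L (projSub e T).orthogonalProjectionOnto

lemma projOf_apply_mem (e : HilbertBasis ℕ ℂ H) {T : Set ℕ} {k : ℕ} (hk : k ∈ T) :
    projOf e T (e k) = e k := by
  have hmem : e k ∈ projSub e T :=
    Submodule.le_topologicalClosure _ (Submodule.subset_span ⟨k, hk, rfl⟩)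
  exact Submodule.starProjection_eq_self_iff.mpr hmem

lemma projOf_apply_not_mem (e : HilbertBasis ℕ ℂ H) {T : Set ℕ} {k : ℕ} (hk : k ∉ T) :
    projOf e T (e k) = 0 := by
  have horth : e k ∈ (projSub e T)ᗮ := by
    rw [Submodule.mem_orthogonal]
    intro u hu
    have hle : projSub e T ≤ LinearMap.ker ((innerSL ℂ (e k)) : H →ₗ[ℂ] ℂ) := by
      apply Submodule.topologicalClosure_minimal
      · rw [Submodule.span_le]
        rintro _ ⟨j, hj, rfl⟩
        simp only [SetLike.mem_coe, LinearMap.mem_ker, ContinuousLinearMap.coe_coe]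
        rw [innerSL_apply_apply]
        exact e.orthonormal.2 (by rintro rfl; exact hk hj)
      · exact ContinuousLinearMap.isClosed_ker _
    have : ⟪e k, u⟫_ℂ = 0 := hle hu
    rw [← inner_conj_symm, this, map_zero]
  have : (projSub e T).orthogonalProjectionOnto (e k) = 0 :=
    Submodule.orthogonalProjectionOnto_apply_of_mem_orthogonal horth
  simp [projOf, this]

lemma projOf_isSelfAdjoint (e : HilbertBasis ℕ ℂ H) (T : Set ℕ) :
    IsSelfAdjoint (projOf e T) :=
  isSelfAdjoint_starProjection _

lemma projOf_idem (e : HilbertBasis ℕ ℂ H) (T : Set ℕ) :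
    projOf e T * projOf e T = projOf e T := by
  ext x
  have hmem : projOf e T x ∈ projSub e T := by
    simp only [projOf, ContinuousLinearMap.comp_apply, Submodule.subtypeL_apply]
    exact Submodule.coe_mem _
  have h : projOf e T (projOf e T x) = projOf e T x := Submodule.starProjection_eq_self_iff.mpr hmem
  simpa [ContinuousLinearMap.mul_apply] using h

lemma projOf_repr (e : HilbertBasis ℕ ℂ H) (T : Set ℕ) (x : H) (k : ℕ) [Decidable (k ∈ T)] :
    e.repr (projOf e T x) k = if k ∈ T then e.repr x k else 0 := by
  rw [e.repr_apply_apply]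
  have hadj : ⟪e k, projOf e T x⟫_ℂ = ⟪projOf e T (e k), x⟫_ℂ := by
    conv_lhs => rw [← (projOf_isSelfAdjoint e T).adjoint_eq]
    rw [ContinuousLinearMap.adjoint_inner_right]
  rw [hadj]
  by_cases hk : k ∈ T
  · rw [if_pos hk, projOf_apply_mem e hk, e.repr_apply_apply]
  · rw [if_neg hk, projOf_apply_not_mem e hk, inner_zero_left]

lemma projOf_norm_sq (e : HilbertBasis ℕ ℂ H) (T : Set ℕ) (x : H) [DecidablePred (· ∈ T)] :
    ‖projOf e T x‖ ^ 2 = ∑' k, (if k ∈ T then ‖e.repr x k‖ ^ 2 else 0) := by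
  have h1 : ‖projOf e T x‖ = ‖e.repr (projOf e T x)‖ := (e.repr.norm_map _).symm
  have h2 : ‖e.repr (projOf e T x)‖ ^ 2 = ∑' k, ‖e.repr (projOf e T x) k‖ ^ 2 := by
    have := lp.norm_rpow_eq_tsum (p := 2) (by norm_num) (e.repr (projOf e T x))
    simpa using this
  rw [h1, h2]
  congr 1
  funext k
  rw [projOf_repr e T x k]
  by_cases hk : k ∈ T
  · rw [if_pos hk, if_pos hk]
  · rw [if_neg hk, if_neg hk, norm_zero]
    simp

lemma repr_sq_summable (e : HilbertBasis ℕ ℂ H) (x : H) :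
    Summable fun k => ‖e.repr x k‖ ^ 2 := by
  have hmem : Memℓp (⇑(e.repr x)) 2 := lp.memℓp (e.repr x)
  rw [Memℓp, if_neg (by norm_num), if_neg (by norm_num)] at hmem
  simpa using hmem

lemma projOf_tendsto_zero (e : HilbertBasis ℕ ℂ H) (T : ℕ → Set ℕ)
    (hT : ∀ k, ∀ᶠ M in atTop, k ∉ T M) (x : H) :
    Tendsto (fun M => ‖projOf e (T M) x‖) atTop (𝓝 0) := by
  classical
  have hb := repr_sq_summable e x
  have hpt : ∀ k, Tendsto (fun M => if k ∈ T M then ‖e.repr x k‖ ^ 2 else 0)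
      atTop (𝓝 0) := by
    intro k
    apply Tendsto.congr' _ (tendsto_const_nhds (x := (0:ℝ)))
    filter_upwards [hT k] with M hM
    rw [if_neg hM]
  have hbound : ∀ᶠ M in atTop, ∀ k,
      ‖if k ∈ T M then ‖e.repr x k‖ ^ 2 else 0‖ ≤ ‖e.repr x k‖ ^ 2 := by
    apply Eventually.of_forall
    intro M k
    by_cases hk : k ∈ T M
    · rw [if_pos hk, Real.norm_eq_abs, abs_of_nonneg (by positivity)]
    · rw [if_neg hk, norm_zero]; positivity
  have hdom := tendsto_tsum_of_dominated_convergence hb hpt hbound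
  rw [tsum_zero] at hdom
  have hsq : Tendsto (fun M => ‖projOf e (T M) x‖ ^ 2) atTop (𝓝 0) := by
    convert hdom using 2 with M
    exact projOf_norm_sq e (T M) x
  have := (Real.continuous_sqrt.tendsto 0).comp hsq
  rw [Real.sqrt_zero] at this
  convert this using 2 with M
  simp only [Function.comp_apply]
  rw [Real.sqrt_sq (norm_nonneg _)]

lemma projOf_diag (e : HilbertBasis ℕ ℂ H) (T : Set ℕ) :
    IsDiagonalOp e (projOf e T) := by
  intro m n hmn
  by_cases hm : m ∈ T
  · rw [projOf_apply_mem e hm]; exact e.orthonormal.2 hmn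
  · rw [projOf_apply_not_mem e hm, inner_zero_left]

end AuxLemmas

/-- Lemma on diagonal projections summing to `I + K`, `K` compact. -/
theorem diagonal_projections_sum_identity_plus_compact
    (e : HilbertBasis ℕ ℂ H) (E : ℕ → H →L[ℂ] H)
    (hE : ∀ n, IsDiagonalProjection e (E n))
    (K : H →L[ℂ] H) (hK : IsCompactOperator ⇑K)
    (hsum : WOTSum E (1 + K)) :
    ∃ n₀ : ℕ,
      (∀ m n, n₀ < m → n₀ < n → m ≠ n → E m * E n = 0) ∧
      (∀ m n, m ≤ n₀ → n ≤ n₀ → m ≠ n →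
        IsFiniteRankOp (E m * E n) ∧ IsOrthogonalProjection (E m * E n)) ∧
      (∀ N, n₀ ≤ N → ∃ EN : H →L[ℂ] H, IsDiagonalProjection e EN ∧
        (∀ x y : H, Tendsto (fun M : ℕ => ∑ n ∈ Finset.Ioc N M, ⟪E n x, y⟫_ℂ)
          atTop (nhds ⟪EN x, y⟫_ℂ)) ∧
        ∀ n, n ≤ N → EN * E n = 0) := by
  classical
  set S : ℕ → Set ℕ := fun n => {k | E n (e k) = e k} with hS
  have hmem : ∀ {n k}, k ∈ S n → E n (e k) = e k := fun h => h
  have hnot : ∀ {n k}, k ∉ S n → E n (e k) = 0 := by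
    intro n k hk
    rcases diagProj_apply e (hE n) k with h | h
    · exact absurd h hk
    · exact h
  clear_value S
  have hFin : ∀ k : ℕ, ∃ F : Finset ℕ, (∀ n, k ∈ S n ↔ n ∈ F) ∧
      ((1 : ℂ) + ⟪K (e k), e k⟫_ℂ = (F.card : ℂ)) := by
    intro k
    have hconv := hsum (e k) (e k)
    have hL : ⟪(1 + K) (e k), e k⟫_ℂ = 1 + ⟪K (e k), e k⟫_ℂ := by
      rw [ContinuousLinearMap.add_apply, ContinuousLinearMap.one_apply, inner_add_left,
        inner_basis_self]
    rw [hL] at hconv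
    have hterm : ∀ n, ⟪E n (e k), e k⟫_ℂ = if k ∈ S n then 1 else 0 := by
      intro n
      by_cases h : k ∈ S n
      · rw [if_pos h, hmem h, inner_basis_self]
      · rw [if_neg h, hnot h, inner_zero_left]
    set s : ℕ → ℂ := fun N => ∑ n ∈ Finset.range N, ⟪E n (e k), e k⟫_ℂ with hs'
    have hterm0 : Tendsto (fun N => s (N + 1) - s N) atTop (𝓝 0) := by
      have h1 : Tendsto (fun N => s (N + 1)) atTop (𝓝 (1 + ⟪K (e k), e k⟫_ℂ)) :=
        hconv.comp (tendsto_add_atTop_nat 1)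
      simpa using h1.sub hconv
    have hstep : ∀ N, s (N + 1) - s N = if k ∈ S N then 1 else 0 := by
      intro N
      rw [hs']
      simp only
      rw [Finset.sum_range_succ, add_sub_cancel_left, hterm]
    have hev : ∀ᶠ N in atTop, k ∉ S N := by
      have hn := hterm0.norm
      rw [norm_zero] at hn
      have h2 := hn.eventually_lt_const (by norm_num : (0:ℝ) < 1)
      filter_upwards [h2] with N hN
      intro hmemN
      rw [hstep N, if_pos hmemN, norm_one] at hN
      exact lt_irrefl 1 hN
    obtain ⟨N₁, hN₁⟩ := eventually_atTop.mp hev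
    refine ⟨(Finset.range N₁).filter (fun n => k ∈ S n), ?_, ?_⟩
    · intro n
      constructor
      · intro hn
        refine Finset.mem_filter.mpr ⟨Finset.mem_range.mpr ?_, hn⟩
        by_contra hlt
        exact hN₁ n (le_of_not_gt hlt) hn
      · intro hn; exact (Finset.mem_filter.mp hn).2
    · have hconst : ∀ N, N₁ ≤ N →
          s N = ((((Finset.range N₁).filter (fun n => k ∈ S n)).card : ℕ) : ℂ) := by
        intro N hN
        rw [hs']
        simp only
        rw [Finset.sum_congr rfl (fun n _ => hterm n), Finset.sum_boole]
        congr 2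
        apply Finset.ext
        intro n
        simp only [Finset.mem_filter, Finset.mem_range]
        constructor
        · rintro ⟨h1, h2⟩
          refine ⟨?_, h2⟩
          by_contra hlt
          exact hN₁ n (le_of_not_gt hlt) h2
        · rintro ⟨h1, h2⟩
          exact ⟨lt_of_lt_of_le h1 hN, h2⟩
      have htc : Tendsto s atTop
          (𝓝 ((((Finset.range N₁).filter (fun n => k ∈ S n)).card : ℕ) : ℂ)) := by
        apply Tendsto.congr' _ tendsto_const_nhds
        filter_upwards [eventually_ge_atTop N₁] with N hN
        exact (hconst N hN).symm
      exact tendsto_nhds_unique hconv htc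
  choose F hF hFcard using hFin
  have hBfin : {k | (F k).card ≠ 1}.Finite := by
    have htend := (inner_compact_tendsto e hK).norm
    rw [norm_zero] at htend
    obtain ⟨k₁, hk₁⟩ := eventually_atTop.mp (htend.eventually_lt_const one_pos)
    apply Set.Finite.subset (Set.finite_Iio k₁)
    intro k hk
    simp only [Set.mem_setOf_eq] at hk
    by_contra hge
    have hk' : k₁ ≤ k := le_of_not_gt hge
    have hlt := hk₁ k hk'
    have h1 : (1:ℝ) ≤ ‖⟪K (e k), e k⟫_ℂ‖ := by
      have hκ : ⟪K (e k), e k⟫_ℂ = ((((F k).card : ℝ) - 1 : ℝ) : ℂ) := by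
        have := hFcard k
        push_cast
        linear_combination this
      rw [hκ, Complex.norm_real, Real.norm_eq_abs]
      rcases Nat.lt_or_ge (F k).card 1 with h | h
      · have hc0 : (F k).card = 0 := by omega
        rw [hc0]
        norm_num
      · have hc2 : 2 ≤ (F k).card := by omega
        have : (2:ℝ) ≤ ((F k).card : ℝ) := by exact_mod_cast hc2
        rw [abs_of_nonneg (by linarith)]
        linarith
    linarith
  have hAA : (⋃ k ∈ {k | (F k).card ≠ 1}, ((F k : Set ℕ))).Finite :=
    Set.Finite.biUnion hBfin (fun k _ => (F k).finite_toSet)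
  obtain ⟨n₀, hn₀⟩ := hAA.bddAbove
  have key1 : ∀ {k m n}, k ∈ S m → k ∈ S n → m ≠ n → (F k).card ≠ 1 := by
    intro k m n hm hn hmn
    have h2 : 1 < (F k).card :=
      Finset.one_lt_card.mpr ⟨m, (hF k m).mp hm, n, (hF k n).mp hn, hmn⟩
    omega
  have key2 : ∀ {k n}, (F k).card ≠ 1 → k ∈ S n → n ≤ n₀ := by
    intro k n hcard hkn
    exact hn₀ (Set.mem_biUnion hcard (by exact_mod_cast (hF k n).mp hkn))
  refine ⟨n₀, ?_, ?_, ?_⟩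
  · intro m n hm hn hmn
    apply basis_ext e
    intro k
    rw [ContinuousLinearMap.mul_apply, ContinuousLinearMap.zero_apply]
    by_cases hkn : k ∈ S n
    · rw [hmem hkn]
      by_cases hkm : k ∈ S m
      · exact absurd (key2 (key1 hkm hkn hmn) hkm) (not_le.mpr hm)
      · exact hnot hkm
    · rw [hnot hkn, map_zero]
  · intro m n _ _ hmn
    have happly : ∀ a b k, (E a * E b) (e k) = if k ∈ S a ∧ k ∈ S b then e k else 0 := by
      intro a b k
      rw [ContinuousLinearMap.mul_apply]
      by_cases hb : k ∈ S b
      · rw [hmem hb]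
        by_cases ha : k ∈ S a
        · rw [if_pos ⟨ha, hb⟩, hmem ha]
        · rw [if_neg (by tauto), hnot ha]
      · rw [hnot hb, map_zero, if_neg (by tauto)]
    have hsa : IsSelfAdjoint (E m * E n) := by
      have hcomm : E n * E m = E m * E n := by
        apply basis_ext e; intro k; rw [happly, happly]
        by_cases h : k ∈ S m ∧ k ∈ S n
        · rw [if_pos ⟨h.2, h.1⟩, if_pos h]
        · rw [if_neg (by tauto), if_neg h]
      have h1 : star (E m * E n) = E n * E m := by
        rw [star_mul, ((hE n).1.1 : star (E n) = E n), ((hE m).1.1 : star (E m) = E m)]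
      rw [IsSelfAdjoint, h1, hcomm]
    have hidem : (E m * E n) * (E m * E n) = E m * E n := by
      apply basis_ext e; intro k
      rw [ContinuousLinearMap.mul_apply, happly m n k]
      by_cases h : k ∈ S m ∧ k ∈ S n
      · rw [if_pos h, happly m n k, if_pos h]
      · rw [if_neg h, map_zero]
    refine ⟨?_, hsa, hidem⟩
    rw [IsFiniteRankOp]
    have hzero : ∀ k, k ∉ hBfin.toFinset → (E m * E n) (e k) = 0 := by
      intro k hk
      rw [happly]
      rw [Set.Finite.mem_toFinset] at hk
      simp only [Set.mem_setOf_eq, not_not] at hk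
      rw [if_neg]
      rintro ⟨h1, h2⟩
      exact (key1 h1 h2 hmn) hk
    have hrange : LinearMap.range ((E m * E n : H →L[ℂ] H) : H →ₗ[ℂ] H) ≤
        Submodule.span ℂ (⇑e '' {k | (F k).card ≠ 1}) := by
      rintro x ⟨z, rfl⟩
      have hcoef : ∀ k ∉ hBfin.toFinset, e.repr ((E m * E n) z) k • e k = 0 := by
        intro k hk
        have h0 : e.repr ((E m * E n) z) k = 0 := by
          rw [e.repr_apply_apply]
          have hadj : ⟪e k, (E m * E n) z⟫_ℂ = ⟪(E m * E n) (e k), z⟫_ℂ := by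
            conv_lhs => rw [← hsa.adjoint_eq]
            rw [ContinuousLinearMap.adjoint_inner_right]
          rw [hadj, hzero k hk, inner_zero_left]
        rw [h0, zero_smul]
      have h1 : HasSum (fun k => e.repr ((E m * E n) z) k • e k) ((E m * E n) z) :=
        e.hasSum_repr _
      have h2 : HasSum (fun k => e.repr ((E m * E n) z) k • e k)
          (∑ k ∈ hBfin.toFinset, e.repr ((E m * E n) z) k • e k) :=
        hasSum_sum_of_ne_finset_zero hcoef
      rw [show ((E m * E n : H →L[ℂ] H) : H →ₗ[ℂ] H) z = (E m * E n) z from rfl,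
        h1.unique h2]
      apply Submodule.sum_mem
      intro k hk
      apply Submodule.smul_mem
      apply Submodule.subset_span
      exact ⟨k, (Set.Finite.mem_toFinset hBfin).mp hk, rfl⟩
    have hfd : FiniteDimensional ℂ (Submodule.span ℂ (⇑e '' {k | (F k).card ≠ 1})) :=
      FiniteDimensional.span_of_finite ℂ (hBfin.image _)
    exact Submodule.finiteDimensional_of_le hrange
  · intro N hN
    set T : Set ℕ := {k | ∃ n, N < n ∧ k ∈ S n} with hT
    have hTS : ∀ n, n ≤ N → ∀ k, k ∈ S n → k ∉ T := by
      intro n hn k hkn hkT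
      obtain ⟨n', hn', hkn'⟩ := hkT
      have hne : n ≠ n' := by omega
      have := key2 (key1 hkn hkn' hne) hkn'
      omega
    refine ⟨projOf e T, ⟨⟨projOf_isSelfAdjoint e T, projOf_idem e T⟩, projOf_diag e T⟩,
      ?_, ?_⟩
    · intro x y
      set U : ℕ → Set ℕ := fun M => {k | ∃ n, N < n ∧ n ≤ M ∧ k ∈ S n} with hU
      have hFM : ∀ M, (∑ n ∈ Finset.Ioc N M, E n) = projOf e (U M) := by
        intro M
        apply basis_ext e
        intro k
        rw [ContinuousLinearMap.sum_apply]
        by_cases hk : k ∈ U M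
        · rw [projOf_apply_mem e hk]
          obtain ⟨n', h1, h2, h3⟩ := hk
          rw [Finset.sum_eq_single_of_mem n' (Finset.mem_Ioc.mpr ⟨h1, h2⟩)]
          · exact hmem h3
          · intro b hb hbn
            apply hnot
            intro hkb
            have hb' := Finset.mem_Ioc.mp hb
            have := key2 (key1 hkb h3 hbn) hkb
            omega
        · rw [projOf_apply_not_mem e hk]
          apply Finset.sum_eq_zero
          intro n hn
          apply hnot
          intro hkn
          exact hk ⟨n, (Finset.mem_Ioc.mp hn).1, (Finset.mem_Ioc.mp hn).2, hkn⟩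
      have hUT : ∀ M k, k ∈ U M → k ∈ T := by
        rintro M k ⟨n, h1, _, h3⟩
        exact ⟨n, h1, h3⟩
      have hdiff : ∀ M, projOf e T - projOf e (U M) = projOf e (T \ U M) := by
        intro M
        apply basis_ext e
        intro k
        rw [ContinuousLinearMap.sub_apply]
        by_cases hkT : k ∈ T
        · by_cases hkU : k ∈ U M
          · rw [projOf_apply_mem e hkT, projOf_apply_mem e hkU,
              projOf_apply_not_mem e (fun hd => hd.2 hkU), sub_self]
          · rw [projOf_apply_mem e hkT, projOf_apply_not_mem e hkU,
              projOf_apply_mem e (Set.mem_diff k |>.mpr ⟨hkT, hkU⟩), sub_zero]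
        · have hkU : k ∉ U M := fun h => hkT (hUT M k h)
          rw [projOf_apply_not_mem e hkT, projOf_apply_not_mem e hkU,
            projOf_apply_not_mem e (fun hd => hkT hd.1)]
          simp
      have heq : ∀ M, (∑ n ∈ Finset.Ioc N M, ⟪E n x, y⟫_ℂ)
          = ⟪projOf e (U M) x, y⟫_ℂ := by
        intro M
        rw [← hFM M, ContinuousLinearMap.sum_apply, sum_inner]
      have htend0 : Tendsto (fun M => ‖projOf e (T \ U M) x‖) atTop (𝓝 0) := by
        apply projOf_tendsto_zero
        intro k
        by_cases hkT : k ∈ T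
        · obtain ⟨n', hn', hkn'⟩ := hkT
          rw [eventually_atTop]
          exact ⟨n', fun M hM hd => hd.2 ⟨n', hn', hM, hkn'⟩⟩
        · exact Eventually.of_forall (fun M hd => hkT hd.1)
      rw [tendsto_iff_norm_sub_tendsto_zero]
      apply squeeze_zero (fun M => norm_nonneg _)
        (g := fun M => ‖projOf e (T \ U M) x‖ * ‖y‖)
      · intro M
        rw [heq M]
        have h3 : ⟪projOf e (U M) x, y⟫_ℂ - ⟪projOf e T x, y⟫_ℂ
            = -⟪projOf e (T \ U M) x, y⟫_ℂ := by
          have h4 := congrArg (fun (A : H →L[ℂ] H) => ⟪A x, y⟫_ℂ) (hdiff M)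
          simp only [ContinuousLinearMap.sub_apply, inner_sub_left] at h4
          linear_combination -h4
        rw [h3, norm_neg]
        exact norm_inner_le_norm _ _
      · simpa using htend0.mul_const ‖y‖
    · intro n hn
      apply basis_ext e
      intro k
      rw [ContinuousLinearMap.mul_apply, ContinuousLinearMap.zero_apply]
      by_cases hk : k ∈ S n
      · rw [hmem hk, projOf_apply_not_mem e (hTS n hn k hk)]
      · rw [hnot hk, map_zero]

end
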